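/- The Weyl-Lie derivative of the Lie bracket along a congruence ξ with Weyl derivative D is L^D_ξ[·,·](X,Y) = −F^D(X,Y) ξ for all vector fields X, Y. -/
import Mathlib


/-- algebraic model, in a trivialization of `𝒱`: the Weyl-Lie derivative of
the Lie bracket along a congruence `ξ` with Weyl derivative `D` is
`L^D_ξ[·,·](X,Y) = -F^D(X,Y) ξ`.  Here `A` is the function ring, `X` the Lie algebra of
vector fields (acting on functions via `act`), `ω` the connection `1`-form of `D`, so that
`L^D_ξ Y = [ξ, Y] + ω(Y) ξ`, the twisted brackets of a `𝒱⁻¹`-valued vector field `v` with a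
vector field `Y` (taken with the tensor-sum connection) are `[v,Y]_D = [v,Y] + ω(Y) v` and
`[Y,v]_D = [Y,v] - ω(Y) v`, and the Faraday curvature is
`F^D(X,Y) = X·ω(Y) - Y·ω(X) - ω([X,Y])`. -/
theorem weyl_lie_of_bracket
    (A : Type*) [CommRing A]
    (X : Type*) [LieRing X] [Module A X]
    (act : X → A → A)
    (hmod : ∀ (x y : X) (f : A), ⁅x, f • y⁆ = f • ⁅x, y⁆ + act x f • y)
    (ω : X →ₗ[A] A)
    (ξ : X)
    (F : X → X → A)
    (hF : ∀ x y, F x y = act x (ω y) - act y (ω x) - ω ⁅x, y⁆)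
    (LD : X → X)
    (hLD : ∀ y, LD y = ⁅ξ, y⁆ + ω y • ξ) :
    ∀ x y : X,
      LD ⁅x, y⁆ - (⁅LD x, y⁆ + ω y • LD x) - (⁅x, LD y⁆ - ω x • LD y)
        = - F x y • ξ := by
  intro x y
  have h1 : ∀ (f : A) (z y : X), ⁅f • z, y⁆ = f • ⁅z, y⁆ - act y f • z := by
    intro f z y
    rw [← lie_skew, hmod, neg_add, ← lie_skew, smul_neg, neg_neg]
    abel
  have hjac : ⁅ξ, ⁅x, y⁆⁆ = ⁅⁅ξ, x⁆, y⁆ + ⁅x, ⁅ξ, y⁆⁆ := leibniz_lie ξ x y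
  simp only [hLD, hF, add_lie, lie_add, h1, hmod, map_add, map_smul, smul_add, smul_smul,
    smul_eq_mul]
  have hsk : (⁅x, ξ⁆ : X) = -⁅ξ, x⁆ := by rw [← lie_skew]
  rw [hjac, hsk]
  module
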